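/- For every real or complex number x with |x| < 1 and all real numbers θ, φ, r, the series ∑_{n=0}^∞ xⁿ sin(nθ) sin((n+r)φ) converges and equals (1/2)·(cos(rφ) − x·cos(θ+(r−1)φ))/(1 − 2x·cos(θ−φ) + x²) − (1/2)·(cos(rφ) − x·cos(θ−(r−1)φ))/(1 − 2x·cos(θ+φ) + x²). -/

import Mathlib

open Real Complex

private lemma norm_x_exp (x : ℂ) (hx : ‖x‖ < 1) (α : ℝ) :
    ‖x * Complex.exp ((α : ℂ) * Complex.I)‖ < 1 := by
  rw [norm_mul, Complex.norm_exp_ofReal_mul_I, mul_one]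
  exact hx

private lemma sinsin (A B : ℂ) :
    Complex.sin A * Complex.sin B = (Complex.cos (A - B) - Complex.cos (A + B)) / 2 := by
  have h1 : (A - B + (A + B)) / 2 = A := by ring
  have h2 : (A - B - (A + B)) / 2 = -B := by ring
  rw [Complex.cos_sub_cos, h1, h2, Complex.sin_neg]
  ring

/-- Key lemma: geometric-type sum of `xⁿ cos (nα + β)`. -/
private lemma aux (x : ℂ) (hx : ‖x‖ < 1) (α β : ℝ) :
    HasSum (fun n : ℕ => x ^ n * Complex.cos ((n : ℂ) * α + β))
      (((Real.cos β : ℂ) - x * (Real.cos (β - α) : ℂ)) /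
        (1 - 2 * x * (Real.cos α : ℂ) + x ^ 2)) := by
  set u : ℂ := Complex.exp ((α : ℂ) * Complex.I) with hu
  set u' : ℂ := Complex.exp ((-α : ℝ) * Complex.I) with hu'
  set v : ℂ := Complex.exp ((β : ℂ) * Complex.I) with hv
  set v' : ℂ := Complex.exp ((-β : ℝ) * Complex.I) with hv'
  have huu' : u * u' = 1 := by
    rw [hu, hu', ← Complex.exp_add]
    push_cast
    ring_nf
    exact Complex.exp_zero
  have hvv' : v * v' = 1 := by
    rw [hv, hv', ← Complex.exp_add]
    push_cast
    ring_nf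
    exact Complex.exp_zero
  have h1 : HasSum (fun n : ℕ => (x * u) ^ n) (1 - x * u)⁻¹ :=
    hasSum_geometric_of_norm_lt_one (norm_x_exp x hx α)
  have h2 : HasSum (fun n : ℕ => (x * u') ^ n) (1 - x * u')⁻¹ :=
    hasSum_geometric_of_norm_lt_one (norm_x_exp x hx (-α))
  have hd1 : (1 - x * u) ≠ 0 := by
    intro h
    have : x * u = 1 := by linear_combination -h
    have := congrArg norm this
    rw [norm_mul, hu, Complex.norm_exp_ofReal_mul_I,
      mul_one, norm_one] at this
    exact absurd this (ne_of_lt hx)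
  have hd2 : (1 - x * u') ≠ 0 := by
    intro h
    have : x * u' = 1 := by linear_combination -h
    have := congrArg norm this
    rw [norm_mul, hu', Complex.norm_exp_ofReal_mul_I,
      mul_one, norm_one] at this
    exact absurd this (ne_of_lt hx)
  have h := (h1.mul_left (v / 2)).add (h2.mul_left (v' / 2))
  have hfun : (fun n : ℕ => v / 2 * (x * u) ^ n + v' / 2 * (x * u') ^ n) =
      fun n : ℕ => x ^ n * Complex.cos ((n : ℂ) * α + β) := by
    funext n
    rw [Complex.cos]
    have e1 : (((n : ℂ) * α + β) * Complex.I) = (β : ℂ) * Complex.I + n * ((α : ℂ) * Complex.I) := by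
      ring
    have e2 : (-((n : ℂ) * α + β) * Complex.I) =
        ((-β : ℝ) : ℂ) * Complex.I + n * (((-α : ℝ) : ℂ) * Complex.I) := by
      push_cast; ring
    rw [e1, e2, Complex.exp_add, Complex.exp_add, Complex.exp_nat_mul, Complex.exp_nat_mul,
      ← hu, ← hu', ← hv, ← hv']
    ring
  rw [hfun] at h
  convert h using 1
  · rfl
  have hcb : (Real.cos β : ℂ) = (v + v') / 2 := by
    rw [Complex.ofReal_cos, Complex.cos, hv, hv']; push_cast; ring_nf
  have hca : (Real.cos α : ℂ) = (u + u') / 2 := by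
    rw [Complex.ofReal_cos, Complex.cos, hu, hu']; push_cast; ring_nf
  have hcba : (Real.cos (β - α) : ℂ) = (v * u' + v' * u) / 2 := by
    rw [Complex.ofReal_cos, Complex.cos, hv, hv', hu, hu', ← Complex.exp_add, ← Complex.exp_add]
    push_cast; ring_nf
  have hden : 1 - 2 * x * (Real.cos α : ℂ) + x ^ 2 = (1 - x * u) * (1 - x * u') := by
    rw [hca]; linear_combination (-(x ^ 2)) * huu'
  rw [hcb, hcba, hden]
  have hdd : (1 - x * u) * (1 - x * u') ≠ 0 := mul_ne_zero hd1 hd2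
  field_simp
  ring

/-- Lemma 3.1: for `|x| < 1` and real `θ, φ, r`, the series
`∑ xⁿ sin nθ sin (n+r)φ` converges to the stated closed form. -/
theorem stmt_0 (x : ℂ) (hx : ‖x‖ < 1) (θ φ r : ℝ) :
    HasSum (fun n : ℕ => x ^ n * (Real.sin (n * θ) : ℂ) * (Real.sin ((n + r) * φ) : ℂ))
      ((1 / 2) * (((Real.cos (r * φ) : ℂ) - x * (Real.cos (θ + (r - 1) * φ) : ℂ)) /
          (1 - 2 * x * (Real.cos (θ - φ) : ℂ) + x ^ 2))
        - (1 / 2) * (((Real.cos (r * φ) : ℂ) - x * (Real.cos (θ - (r - 1) * φ) : ℂ)) /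
          (1 - 2 * x * (Real.cos (θ + φ) : ℂ) + x ^ 2))) := by
  have h1 := aux x hx (θ - φ) (-(r * φ))
  have h2 := aux x hx (θ + φ) (r * φ)
  have h := (h1.sub h2).div_const 2
  convert h using 1
  · rfl
  · funext n
    have e1 : ((n : ℂ) * ((θ - φ : ℝ) : ℂ) + ((-(r * φ) : ℝ) : ℂ)) =
        (n : ℂ) * θ - ((n : ℂ) + r) * φ := by push_cast; ring
    have e2 : ((n : ℂ) * ((θ + φ : ℝ) : ℂ) + ((r * φ : ℝ) : ℂ)) =
        (n : ℂ) * θ + ((n : ℂ) + r) * φ := by push_cast; ring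
    rw [e1, e2]
    rw [Complex.ofReal_sin, Complex.ofReal_sin]
    have es1 : ((n * θ : ℝ) : ℂ) = (n : ℂ) * θ := by push_cast; ring
    have es2 : (((n + r) * φ : ℝ) : ℂ) = ((n : ℂ) + r) * φ := by push_cast; ring
    rw [es1, es2, mul_assoc, sinsin]
    ring
  · have c1 : Real.cos (-(r * φ)) = Real.cos (r * φ) := Real.cos_neg _
    have c2 : Real.cos (-(r * φ) - (θ - φ)) = Real.cos (θ + (r - 1) * φ) := by
      rw [show -(r * φ) - (θ - φ) = -(θ + (r - 1) * φ) by ring, Real.cos_neg]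
    have c3 : Real.cos (r * φ - (θ + φ)) = Real.cos (θ - (r - 1) * φ) := by
      rw [show r * φ - (θ + φ) = -(θ - (r - 1) * φ) by ring, Real.cos_neg]
    rw [c1, c2, c3]
    ring
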